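/- In the setting of the AdiaConvert construction, for every x ∈ 𝕏, s ∈ [0,1] and ε ∈ (0,1], the s-derivative of |Ψ_x^+(s,ε)⟩ satisfies ∂_s|Ψ_x^+(s,ε)⟩ = (π/2)·H_x(s,ε)|Ψ_x^−(s,ε)⟩, where H_x(s,ε) = Λ(s,ε) − Π_x. -/

import Mathlib

noncomputable section
open scoped ComplexConjugate

namespace AdiaConvert

/-- Index type of the Hilbert space `H = H_O ⊕ (ℂⁿ ⊗ ℂ^{Σ∪{0̄}} ⊗ H_W)`, where
`H_O = ℂ² ⊗ H'`, `H' = ℂ^V`, `H_W = ℂ^W`, and the blank symbol `0̄` is `Option.none`. -/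
abbrev Idx (Al V W : Type*) (n : ℕ) : Type _ := (Fin 2 × V) ⊕ (Fin n × Option Al × W)

/-- The Hilbert space of the AdiaConvert algorithm. -/
abbrev Hsp (Al V W : Type*) (n : ℕ) : Type _ := EuclideanSpace ℂ (Idx Al V W n)

/-- Build a vector of `Hsp` from its coordinates. -/
def mk {Al V W : Type*} {n : ℕ} (f : Idx Al V W n → ℂ) : Hsp Al V W n :=
  (WithLp.equiv 2 _).symm f

variable {Al V W X : Type*} {n : ℕ}

/-- `θ(s) = πs/2`. -/
def θ (s : ℝ) : ℝ := Real.pi * s / 2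

/-- `ξ(s) = 2 cos θ(s) sin θ(s)`. -/
def ξ (s : ℝ) : ℝ := 2 * Real.cos (θ s) * Real.sin (θ s)

/-- The coordinates of `|y⁺⟩ = (|0̄⟩ + |y⟩)/√2`. -/
def gP [DecidableEq Al] (y : Al) : Option Al → ℂ := fun a =>
  if a = none then (Real.sqrt 2 : ℂ)⁻¹ else if a = some y then (Real.sqrt 2 : ℂ)⁻¹ else 0

/-- The coordinates of `|y⁻⟩ = (|0̄⟩ - |y⟩)/√2`. -/
def gM [DecidableEq Al] (y : Al) : Option Al → ℂ := fun a =>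
  if a = none then (Real.sqrt 2 : ℂ)⁻¹ else if a = some y then -(Real.sqrt 2 : ℂ)⁻¹ else 0

/-- `|k_x⁺(s)⟩ = cos θ(s) |0,ρ_x⟩ + sin θ(s) |1,σ_x⟩` (embedded in `H`). -/
def kP (ρv σv : X → EuclideanSpace ℂ V) (s : ℝ) (x : X) : Hsp Al V W n :=
  mk fun q => match q with
  | .inl (b, i) => if b = 0 then (Real.cos (θ s) : ℂ) * ρv x i
                   else (Real.sin (θ s) : ℂ) * σv x i
  | .inr _ => 0

/-- `|k_x⁻(s)⟩ = -sin θ(s) |0,ρ_x⟩ + cos θ(s) |1,σ_x⟩` (embedded in `H`). -/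
def kM (ρv σv : X → EuclideanSpace ℂ V) (s : ℝ) (x : X) : Hsp Al V W n :=
  mk fun q => match q with
  | .inl (b, i) => if b = 0 then -(Real.sin (θ s) : ℂ) * ρv x i
                   else (Real.cos (θ s) : ℂ) * σv x i
  | .inr _ => 0

/-- `∑ᵢ |i⟩ ⊗ |x_i^±⟩ ⊗ |c_{x,i}⟩` (embedded in `H`), where the `ℂ^{Σ∪{0̄}}` part has
coordinates `g (x_i)`. -/
def qPart (g : Al → Option Al → ℂ) (inp : X → Fin n → Al)
    (c : X → Fin n → EuclideanSpace ℂ W) (x : X) : Hsp Al V W n :=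
  mk fun q => match q with
  | .inl _ => 0
  | .inr (i, a, w) => g (inp x i) a * c x i w

/-- The non-normalized state `|Ψ_x⁺(s,ε)⟩`. -/
def PsiP [DecidableEq Al] (ρv σv : X → EuclideanSpace ℂ V) (inp : X → Fin n → Al)
    (u : X → Fin n → EuclideanSpace ℂ W) (Wr s ε : ℝ) (x : X) : Hsp Al V W n :=
  kP ρv σv s x + ((ε / Real.sqrt Wr : ℝ) : ℂ) • qPart gP inp u x

/-- The non-normalized state `|Ψ_x⁻(s,ε)⟩`. -/
def PsiM [DecidableEq Al] (ρv σv : X → EuclideanSpace ℂ V) (inp : X → Fin n → Al)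
    (v : X → Fin n → EuclideanSpace ℂ W) (Wr s ε : ℝ) (x : X) : Hsp Al V W n :=
  kM ρv σv s x + ((ξ s * (Real.sqrt Wr / ε) : ℝ) : ℂ) • qPart gM inp v x

/-- The normalized state `|ψ_x⁺(s,ε)⟩`. -/
def psiP [Fintype Al] [Fintype V] [Fintype W] [DecidableEq Al] (ρv σv : X → EuclideanSpace ℂ V) (inp : X → Fin n → Al)
    (u : X → Fin n → EuclideanSpace ℂ W) (Wr s ε : ℝ) (x : X) : Hsp Al V W n :=
  ‖PsiP ρv σv inp u Wr s ε x‖⁻¹ • PsiP ρv σv inp u Wr s ε x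

/-- The rank-one operator `|a⟩⟨b| : v ↦ ⟨b|v⟩·a`. -/
def ketbra [Fintype Al] [Fintype V] [Fintype W]
    (a b : Hsp Al V W n) : Hsp Al V W n →L[ℂ] Hsp Al V W n :=
  (innerSL ℂ b).smulRight a

/-- The orthogonal projection `Λ(s,ε)` onto `span{|Ψ_x⁻(s,ε)⟩ : x ∈ 𝕏}`. -/
def Lam [Fintype Al] [Fintype V] [Fintype W] [DecidableEq Al]
    (ρv σv : X → EuclideanSpace ℂ V) (inp : X → Fin n → Al)
    (v : X → Fin n → EuclideanSpace ℂ W) (Wr s ε : ℝ) :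
    Hsp Al V W n →L[ℂ] Hsp Al V W n :=
  (Submodule.span ℂ (Set.range fun x : X => PsiM ρv σv inp v Wr s ε x)).subtypeL.comp
    (Submodule.orthogonalProjection
      (Submodule.span ℂ (Set.range fun x : X => PsiM ρv σv inp v Wr s ε x)))

/-- The matrix of the oracle Hamiltonian `Π_x = ∑ᵢ |i⟩⟨i| ⊗ |x_i⁻⟩⟨x_i⁻| ⊗ I_W`
(acting as `0` on `H_O`). -/
def PiMat [DecidableEq Al] [DecidableEq W] (inp : X → Fin n → Al) (x : X) :
    Matrix (Idx Al V W n) (Idx Al V W n) ℂ :=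
  fun q q' => match q, q' with
  | .inr (i, a, w), .inr (i', a', w') =>
      if i = i' ∧ w = w' then gM (inp x i) a * conj (gM (inp x i) a') else 0
  | _, _ => 0

/-- The oracle Hamiltonian `Π_x` as an operator on `H`. -/
def PiC [Fintype Al] [Fintype V] [Fintype W]
    [DecidableEq Al] [DecidableEq V] [DecidableEq W]
    (inp : X → Fin n → Al) (x : X) : Hsp Al V W n →L[ℂ] Hsp Al V W n :=
  Matrix.toEuclideanCLM (𝕜 := ℂ) (PiMat inp x)

/-- The total Hamiltonian `H_x(s,ε) = Λ(s,ε) − Π_x`. -/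
def Hx [Fintype Al] [Fintype V] [Fintype W]
    [DecidableEq Al] [DecidableEq V] [DecidableEq W]
    (ρv σv : X → EuclideanSpace ℂ V) (inp : X → Fin n → Al)
    (v : X → Fin n → EuclideanSpace ℂ W) (Wr s ε : ℝ) (x : X) :
    Hsp Al V W n →L[ℂ] Hsp Al V W n :=
  Lam ρv σv inp v Wr s ε - PiC inp x

/-- The projection `P_x(s,ε) = |ψ_x⁺(s,ε)⟩⟨ψ_x⁺(s,ε)|`. -/
def Pproj [Fintype Al] [Fintype V] [Fintype W] [DecidableEq Al]
    (ρv σv : X → EuclideanSpace ℂ V) (inp : X → Fin n → Al)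
    (u : X → Fin n → EuclideanSpace ℂ W) (Wr s ε : ℝ) (x : X) :
    Hsp Al V W n →L[ℂ] Hsp Al V W n :=
  ketbra (psiP ρv σv inp u Wr s ε x) (psiP ρv σv inp u Wr s ε x)

/-- The operator `X_x(s,ε) = (π/(2N_x(ε))) |Ψ_x⁻(s,ε)⟩⟨ψ_x⁺(s,ε)|`. -/
def Xx [Fintype Al] [Fintype V] [Fintype W] [DecidableEq Al]
    (ρv σv : X → EuclideanSpace ℂ V) (inp : X → Fin n → Al)
    (u v : X → Fin n → EuclideanSpace ℂ W) (Wr s ε : ℝ) (x : X) :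
    Hsp Al V W n →L[ℂ] Hsp Al V W n :=
  ((Real.pi / (2 * ‖PsiP ρv σv inp u Wr s ε x‖) : ℝ) : ℂ) •
    ketbra (PsiM ρv σv inp v Wr s ε x) (psiP ρv σv inp u Wr s ε x)

end AdiaConvert

open AdiaConvert

namespace AdiaConvertAux

open AdiaConvert

variable {Al V W X : Type*} {n : ℕ}

/-- `|0,ρ_x⟩` embedded in `H`. -/
def vA (ρv : X → EuclideanSpace ℂ V) (x : X) : Hsp Al V W n :=
  mk fun q => match q with
  | .inl (b, i) => if b = 0 then ρv x i else 0
  | .inr _ => 0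

/-- `|1,σ_x⟩` embedded in `H`. -/
def vB (σv : X → EuclideanSpace ℂ V) (x : X) : Hsp Al V W n :=
  mk fun q => match q with
  | .inl (b, i) => if b = 0 then 0 else σv x i
  | .inr _ => 0

lemma kP_eq (ρv σv : X → EuclideanSpace ℂ V) (s : ℝ) (x : X) :
    (kP ρv σv s x : Hsp Al V W n) =
      Real.cos (θ s) • vA ρv x + Real.sin (θ s) • vB σv x := by
  ext q
  rcases q with ⟨b, i⟩ | w
  · by_cases hb : b = 0 <;>
      simp [kP, vA, vB, mk, hb, Complex.real_smul]
  · simp [kP, vA, vB, mk]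

lemma kM_eq (ρv σv : X → EuclideanSpace ℂ V) (s : ℝ) (x : X) :
    (kM ρv σv s x : Hsp Al V W n) =
      (-Real.sin (θ s)) • vA ρv x + Real.cos (θ s) • vB σv x := by
  ext q
  rcases q with ⟨b, i⟩ | w
  · by_cases hb : b = 0 <;>
      simp [kM, vA, vB, mk, hb, Complex.real_smul]
  · simp [kM, vA, vB, mk]

lemma hasDerivAt_kP [Fintype Al] [Fintype V] [Fintype W]
    (ρv σv : X → EuclideanSpace ℂ V) (s : ℝ) (x : X) :
    HasDerivAt (fun t => (kP ρv σv t x : Hsp Al V W n))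
      ((Real.pi / 2 : ℝ) • kM ρv σv s x) s := by
  have hθ : HasDerivAt θ (Real.pi / 2) s := by
    have h0 := ((hasDerivAt_id s).const_mul Real.pi).div_const 2
    simp only [id, mul_one] at h0
    exact h0
  have hc : HasDerivAt (fun t => Real.cos (θ t)) (-Real.sin (θ s) * (Real.pi / 2)) s :=
    (Real.hasDerivAt_cos (θ s)).comp s hθ
  have hs' : HasDerivAt (fun t => Real.sin (θ t)) (Real.cos (θ s) * (Real.pi / 2)) s :=
    (Real.hasDerivAt_sin (θ s)).comp s hθ
  have h := (hc.smul_const (vA ρv x : Hsp Al V W n)).add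
    (hs'.smul_const (vB σv x : Hsp Al V W n))
  have he : (fun t => Real.cos (θ t) • (vA ρv x : Hsp Al V W n)
      + Real.sin (θ t) • vB σv x) = fun t => kP ρv σv t x := by
    funext t; rw [kP_eq]
  change HasDerivAt (fun t => Real.cos (θ t) • (vA ρv x : Hsp Al V W n) + Real.sin (θ t) • vB σv x) _ s at h
  rw [he] at h
  convert h using 1
  rw [kM_eq, smul_add, smul_smul, smul_smul]
  congr 2 <;> ring

lemma sum_conj_gM [Fintype Al] [DecidableEq Al] (y : Al) :
    ∑ a' : Option Al, (starRingEnd ℂ) (gM y a') * gM y a' = 1 := by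
  have h2 : (Real.sqrt 2 : ℂ)⁻¹ * (Real.sqrt 2 : ℂ)⁻¹ = 2⁻¹ := by
    rw [← mul_inv, ← Complex.ofReal_mul, Real.mul_self_sqrt (by norm_num)]
    norm_num
  rw [Fintype.sum_option]
  have h3 : ∀ a' : Al, (starRingEnd ℂ) (gM y (some a')) * gM y (some a')
      = if a' = y then 2⁻¹ else 0 := by
    intro a'
    by_cases h : a' = y <;> simp [gM, h, h2]
  rw [Finset.sum_congr rfl fun a' _ => h3 a', Finset.sum_ite_eq' Finset.univ y]
  simp [gM, h2]
  norm_num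

lemma PiC_apply_qPart [Fintype Al] [Fintype V] [Fintype W]
    [DecidableEq Al] [DecidableEq V] [DecidableEq W]
    (inp : X → Fin n → Al) (c : X → Fin n → EuclideanSpace ℂ W) (x : X) :
    PiC (V := V) inp x (qPart (V := V) gM inp c x) = qPart (V := V) gM inp c x := by
  ext q
  have hco : ∀ z : Hsp Al V W n, PiC (V := V) inp x z q =
      (PiMat (V := V) inp x).mulVec (fun q' => z q') q := by
    intro z
    have := congrFun (Matrix.ofLp_toEuclideanCLM (𝕜 := ℂ) (PiMat (V := V) inp x) z) q
    simpa [PiC] using this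
  rw [hco]
  rcases q with ⟨b, i⟩ | ⟨i, a, w⟩
  · simp [Matrix.mulVec, dotProduct, PiMat, qPart, mk]
  · rw [Matrix.mulVec, dotProduct, Fintype.sum_sum_type]
    have h1 : ∀ p : Fin 2 × V, PiMat (V := V) inp x (.inr (i, a, w)) (.inl p) *
        qPart (V := V) gM inp c x (.inl p) = 0 := by
      intro p; simp [PiMat]
    rw [Finset.sum_congr rfl fun p _ => h1 p, Finset.sum_const_zero, zero_add]
    have h2 : ∀ p : Fin n × Option Al × W,
        PiMat (V := V) inp x (.inr (i, a, w)) (.inr p) *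
          qPart (V := V) gM inp c x (.inr p) =
        if p.1 = i ∧ p.2.2 = w then
          gM (inp x i) a * c x i w *
            ((starRingEnd ℂ) (gM (inp x i) p.2.1) * gM (inp x i) p.2.1) else 0 := by
      rintro ⟨i', a', w'⟩
      by_cases h : i = i' ∧ w = w'
      · obtain ⟨rfl, rfl⟩ := h
        simp [PiMat, qPart, mk]; ring
      · have h' : ¬ (i' = i ∧ w' = w) := by tauto
        simp [PiMat, qPart, mk, h, h']
    rw [Finset.sum_congr rfl fun p _ => h2 p, Fintype.sum_prod_type]
    have h3 : ∀ i' : Fin n, ∀ a' : Option Al,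
        (∑ w' : W, if i' = i ∧ w' = w then
          gM (inp x i) a * c x i w *
            ((starRingEnd ℂ) (gM (inp x i) a') * gM (inp x i) a') else 0) =
        if i' = i then gM (inp x i) a * c x i w *
            ((starRingEnd ℂ) (gM (inp x i) a') * gM (inp x i) a') else 0 := by
      intro i' a'; by_cases hi : i' = i <;> simp [hi, Finset.sum_ite_eq']
    simp only [Fintype.sum_prod_type, h3]
    have h4 : ∀ i' : Fin n,
        (∑ a' : Option Al, if i' = i then gM (inp x i) a * c x i w *
            ((starRingEnd ℂ) (gM (inp x i) a') * gM (inp x i) a') else 0) =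
        if i' = i then gM (inp x i) a * c x i w else 0 := by
      intro i'
      by_cases hi : i' = i
      · simp only [hi, if_true]
        rw [← Finset.mul_sum, sum_conj_gM, mul_one]
      · simp [hi]
    rw [Finset.sum_congr rfl fun i' _ => h4 i', Finset.sum_ite_eq' Finset.univ i]
    simp [qPart, mk]

lemma PiC_apply_kM [Fintype Al] [Fintype V] [Fintype W]
    [DecidableEq Al] [DecidableEq V] [DecidableEq W]
    (inp : X → Fin n → Al) (ρv σv : X → EuclideanSpace ℂ V) (s : ℝ) (x : X) :
    PiC (V := V) (W := W) (n := n) inp x (kM ρv σv s x) = 0 := by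
  ext q
  have hco : ∀ z : Hsp Al V W n, PiC (V := V) inp x z q =
      (PiMat (V := V) inp x).mulVec (fun q' => z q') q := by
    intro z
    have := congrFun (Matrix.ofLp_toEuclideanCLM (𝕜 := ℂ) (PiMat (V := V) inp x) z) q
    simpa [PiC] using this
  rw [hco]
  rcases q with ⟨b, i⟩ | ⟨i, a, w⟩
  · simp [Matrix.mulVec, dotProduct, PiMat]
  · rw [Matrix.mulVec, dotProduct, Fintype.sum_sum_type]
    have h1 : ∀ p : Fin 2 × V, PiMat (V := V) inp x (.inr (i, a, w)) (.inl p) *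
        (kM ρv σv s x : Hsp Al V W n) (.inl p) = 0 := by
      intro p; simp [PiMat]
    have h2 : ∀ p : Fin n × Option Al × W, PiMat (V := V) inp x (.inr (i, a, w)) (.inr p) *
        (kM ρv σv s x : Hsp Al V W n) (.inr p) = 0 := by
      intro p; simp [kM, mk]
    simp only [h1, h2, Finset.sum_const_zero, add_zero]
    rfl

end AdiaConvertAux


/-- `∂ₛ|Ψ_x⁺(s,ε)⟩ = (π/2)·H_x(s,ε)|Ψ_x⁻(s,ε)⟩`. -/
theorem stmt16
    {Al V W : Type*} [Fintype Al] [DecidableEq Al] [Fintype V] [DecidableEq V]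
    [Fintype W] [DecidableEq W]
    {n : ℕ} {X : Type*} [Fintype X] (inp : X → Fin n → Al)
    (ρv σv : X → EuclideanSpace ℂ V)
    (hρ : ∀ x, ‖ρv x‖ = 1) (hσ : ∀ x, ‖σv x‖ = 1)
    (Wr : ℝ) (hW : 0 < Wr)
    (u v : X → Fin n → EuclideanSpace ℂ W)
    (hu : ∀ x, ∑ i, ‖u x i‖ ^ 2 ≤ Wr) (hv : ∀ x, ∑ i, ‖v x i‖ ^ 2 ≤ Wr)
    (hadv : ∀ x y : X,
      (inner ℂ (ρv x) (ρv y) : ℂ) - (inner ℂ (σv x) (σv y) : ℂ) =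
        ∑ i ∈ Finset.univ.filter (fun i => inp x i ≠ inp y i),
          (inner ℂ (u x i) (v y i) : ℂ))
    (ε : ℝ) (hε0 : 0 < ε) (hε1 : ε ≤ 1) :
    ∀ x : X, ∀ s ∈ Set.Icc (0:ℝ) 1,
      HasDerivWithinAt (fun t => PsiP ρv σv inp u Wr t ε x)
        ((Real.pi / 2 : ℝ) •
          Hx ρv σv inp v Wr s ε x (PsiM ρv σv inp v Wr s ε x))
        (Set.Icc 0 1) s := by
  intro x s hs
  have hmem : PsiM ρv σv inp v Wr s ε x ∈
      Submodule.span ℂ (Set.range fun y : X => PsiM ρv σv inp v Wr s ε y) :=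
    Submodule.subset_span ⟨x, rfl⟩
  have hLam : Lam ρv σv inp v Wr s ε (PsiM ρv σv inp v Wr s ε x)
      = PsiM ρv σv inp v Wr s ε x := by
    rw [Lam]
    simp only [ContinuousLinearMap.comp_apply, Submodule.subtypeL_apply]
    exact Submodule.starProjection_eq_self_iff.mpr hmem
  have hPi : PiC inp x (PsiM ρv σv inp v Wr s ε x)
      = ((ξ s * (Real.sqrt Wr / ε) : ℝ) : ℂ) • qPart gM inp v x := by
    rw [PsiM, map_add, map_smul, AdiaConvertAux.PiC_apply_qPart,
      AdiaConvertAux.PiC_apply_kM, zero_add]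
  have key : Hx ρv σv inp v Wr s ε x (PsiM ρv σv inp v Wr s ε x)
      = kM ρv σv s x := by
    rw [Hx, ContinuousLinearMap.sub_apply, hLam, hPi, PsiM, add_sub_cancel_right]
  rw [key]
  have hD := (AdiaConvertAux.hasDerivAt_kP ρv σv s x).add_const
    (((ε / Real.sqrt Wr : ℝ) : ℂ) • qPart (V := V) gP inp u x)
  exact hD.hasDerivWithinAt
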